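/- Let W, U, Z be finitely-valued random variables such that both W − U − Z and U − W − Z are Markov chains. Suppose w₁, w₂ ∈ 𝒲 satisfy P_W(w₁) > 0, P_W(w₂) > 0, and there exists z ∈ 𝒵 with P_{Z|W}(z|w₁) ≠ P_{Z|W}(z|w₂). Then for every u ∈ 𝒰, at least one of P_{U|W}(u|w₁) and P_{U|W}(u|w₂) equals zero. -/
import Mathlib


open Finset

section PD
variable {Ω α β γ : Type*}

open Classical in
/-- Pushforward distribution of `p` under the random variable `f`. -/
noncomputable def push [Fintype Ω] (p : Ω → ℝ) (f : Ω → α) : α → ℝ :=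
  fun a => ∑ ω, if f ω = a then p ω else 0

/-- Shannon entropy (base 2) of a pmf on a finite alphabet. -/
noncomputable def ent [Fintype α] (q : α → ℝ) : ℝ := -∑ a, q a * Real.logb 2 (q a)

/-- Entropy of a random variable `f` under the distribution `p` on the sample space. -/
noncomputable def H [Fintype Ω] [Fintype α] (p : Ω → ℝ) (f : Ω → α) : ℝ := ent (push p f)

/-- Conditional entropy `H(f | g)`. -/
noncomputable def condH [Fintype Ω] [Fintype α] [Fintype β] (p : Ω → ℝ) (f : Ω → α) (g : Ω → β) : ℝ :=
  H p (fun ω => (f ω, g ω)) - H p g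

/-- Mutual information `I(f ; g)`. -/
noncomputable def mi [Fintype Ω] [Fintype α] [Fintype β] (p : Ω → ℝ) (f : Ω → α) (g : Ω → β) : ℝ :=
  H p f + H p g - H p (fun ω => (f ω, g ω))

/-- Conditional mutual information `I(f ; g | h)`. -/
noncomputable def cmi [Fintype Ω] [Fintype α] [Fintype β] [Fintype γ]
    (p : Ω → ℝ) (f : Ω → α) (g : Ω → β) (h : Ω → γ) : ℝ :=
  condH p f h + condH p g h - condH p (fun ω => (f ω, g ω)) h

/-- `p` is a probability mass function. -/
def IsProb [Fintype Ω] (p : Ω → ℝ) : Prop := (∀ ω, 0 ≤ p ω) ∧ ∑ ω, p ω = 1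

/-- Markov chain `f − g − h`: conditional independence of `f` and `h` given `g`,
expressed as `P(a,b,c)·P(b) = P(a,b)·P(b,c)`. -/
def Markov [Fintype Ω] (p : Ω → ℝ) (f : Ω → α) (g : Ω → β) (h : Ω → γ) : Prop :=
  ∀ a b c, push p (fun ω => (f ω, g ω, h ω)) (a, b, c) * push p g b =
    push p (fun ω => (f ω, g ω)) (a, b) * push p (fun ω => (g ω, h ω)) (b, c)

open Classical in
/-- Kullback–Leibler divergence (base 2), with the sum restricted to the support of `P`. -/
noncomputable def KL [Fintype α] (P Q : α → ℝ) : ℝ :=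
  ∑ a, if 0 < P a then P a * Real.logb 2 (P a / Q a) else 0

end PD

section Aux
variable {Ω W U Z : Type*} [Fintype Ω] [Fintype W] [Fintype U] [Fintype Z]

lemma push_nonneg' (p : Ω → ℝ) (hp : ∀ ω, 0 ≤ p ω) {α : Type*} (f : Ω → α) (a : α) :
    0 ≤ push p f a := by
  classical
  refine Finset.sum_nonneg fun ω _ => ?_
  split_ifs
  exacts [hp ω, le_rfl]

lemma push_swap (p : Ω → ℝ) (fW : Ω → W) (fU : Ω → U) (w : W) (u : U) :
    push p (fun ω => (fU ω, fW ω)) (u, w) = push p (fun ω => (fW ω, fU ω)) (w, u) := by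
  classical
  unfold push
  refine Finset.sum_congr rfl fun ω _ => ?_
  by_cases h1 : fW ω = w <;> by_cases h2 : fU ω = u <;> simp [h1, h2, Prod.ext_iff]

lemma push_swap3 (p : Ω → ℝ) (fW : Ω → W) (fU : Ω → U) (fZ : Ω → Z) (w : W) (u : U) (z : Z) :
    push p (fun ω => (fU ω, fW ω, fZ ω)) (u, w, z) =
    push p (fun ω => (fW ω, fU ω, fZ ω)) (w, u, z) := by
  classical
  unfold push
  refine Finset.sum_congr rfl fun ω _ => ?_
  by_cases h1 : fW ω = w <;> by_cases h2 : fU ω = u <;> by_cases h3 : fZ ω = z <;>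
    simp [h1, h2, h3, Prod.ext_iff]

lemma push_marginal (p : Ω → ℝ) (fW : Ω → W) (fU : Ω → U) (u : U) :
    push p fU u = ∑ w, push p (fun ω => (fW ω, fU ω)) (w, u) := by
  classical
  unfold push
  rw [Finset.sum_comm]
  refine Finset.sum_congr rfl fun ω _ => ?_
  simp only [Prod.mk.injEq, ite_and]
  rw [Finset.sum_ite_eq]
  simp

end Aux

/-- if both `W − U − Z` and `U − W − Z` are Markov chains, and
`w₁, w₂` have positive probability but distinct conditional channel laws
`P_{Z|W}(·|w₁) ≠ P_{Z|W}(·|w₂)`, then for every `u`, at least one of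
`P_{U|W}(u|w₁)` and `P_{U|W}(u|w₂)` is zero. -/
theorem disjoint_conditional_support {Ω W U Z : Type*}
    [Fintype Ω] [Fintype W] [Fintype U] [Fintype Z]
    (p : Ω → ℝ) (hp : IsProb p)
    (fW : Ω → W) (fU : Ω → U) (fZ : Ω → Z)
    (hWUZ : Markov p fW fU fZ) (hUWZ : Markov p fU fW fZ)
    (w₁ w₂ : W)
    (h₁ : 0 < push p fW w₁) (h₂ : 0 < push p fW w₂)
    (z : Z)
    (hdiff : push p (fun ω => (fW ω, fZ ω)) (w₁, z) / push p fW w₁ ≠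
             push p (fun ω => (fW ω, fZ ω)) (w₂, z) / push p fW w₂) :
    ∀ u : U, push p (fun ω => (fW ω, fU ω)) (w₁, u) / push p fW w₁ = 0 ∨
             push p (fun ω => (fW ω, fU ω)) (w₂, u) / push p fW w₂ = 0 := by
  intro u
  by_contra hcon
  push_neg at hcon
  obtain ⟨hu1, hu2⟩ := hcon
  have hnn := hp.1
  -- positivity of the joints
  have ha1 : 0 < push p (fun ω => (fW ω, fU ω)) (w₁, u) := by
    rcases lt_or_eq_of_le (push_nonneg' p hnn _ (w₁, u)) with h | h
    · exact h
    · exact absurd (by rw [← h]; simp) hu1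
  have ha2 : 0 < push p (fun ω => (fW ω, fU ω)) (w₂, u) := by
    rcases lt_or_eq_of_le (push_nonneg' p hnn _ (w₂, u)) with h | h
    · exact h
    · exact absurd (by rw [← h]; simp) hu2
  have hU : 0 < push p fU u := by
    rw [push_marginal p fW fU u]
    calc 0 < push p (fun ω => (fW ω, fU ω)) (w₁, u) := ha1
      _ ≤ _ := Finset.single_le_sum (fun w _ => push_nonneg' p hnn _ (w, u))
        (Finset.mem_univ w₁)
  have key : ∀ w : W, 0 < push p fW w → 0 < push p (fun ω => (fW ω, fU ω)) (w, u) →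
      push p (fun ω => (fW ω, fZ ω)) (w, z) / push p fW w =
      push p (fun ω => (fU ω, fZ ω)) (u, z) / push p fU u := by
    intro w hw hwu
    have e1 := hWUZ w u z
    have e2 := hUWZ u w z
    rw [push_swap3 p fW fU fZ, push_swap p fW fU] at e2
    rw [div_eq_div_iff (ne_of_gt hw) (ne_of_gt hU)]
    refine mul_left_cancel₀ (ne_of_gt hwu) ?_
    linear_combination push p fW w * e1 - push p fU u * e2
  exact hdiff ((key w₁ h₁ ha1).trans (key w₂ h₂ ha2).symm)
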